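/- Let D > 0 and γ > 0 be real numbers, let p_v, p_ve ≥ 0 be reals, and let m ≥ 1 be an integer. Define the sequence (L_k)_{k≥0} by L_0 = p_v·D/(γ+D) and, for k ≥ 1, L_k = (L_{k−1}·(k−1+γ) + δ_{k,m}·p_ve·D)/(k+γ+D), where δ_{k,m} equals 1 if k = m and 0 otherwise. Then lim_{k→∞} L_k · k^{1+D} = p_v·D·Γ(γ+D)/Γ(γ) + p_ve·D·Γ(m+γ+D)/Γ(m+γ). In particular, the sequence (L_k) decays like a power law with exponent β = 1 + D. -/

import Mathlib

open Filter Real in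
private lemma gamma_prod_aux (s : ℝ) (hs : 0 < s) (n : ℕ) :
    Real.Gamma (s + n) = Real.Gamma s * ∏ j ∈ Finset.range n, (s + j) := by
  induction n with
  | zero => simp
  | succ n ih =>
    rw [Finset.prod_range_succ, ← mul_assoc, ← ih]
    have h : s + ((n : ℕ) + 1 : ℕ) = (s + n) + 1 := by push_cast; ring
    rw [h, Real.Gamma_add_one (by positivity)]
    ring

open Filter Real in
private lemma key_asymp_aux (γ D : ℝ) (hγ : 0 < γ) (hD : 0 < D) :
    Tendsto (fun k : ℕ => (k : ℝ) ^ ((1 : ℝ) + D) *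
      (Real.Gamma ((k : ℝ) + γ) / Real.Gamma ((k : ℝ) + 1 + γ + D))) atTop (nhds 1) := by
  have hγne : Real.Gamma γ ≠ 0 := (Real.Gamma_pos_of_pos hγ).ne'
  have hγDne : Real.Gamma (γ + 1 + D) ≠ 0 := (Real.Gamma_pos_of_pos (by linarith)).ne'
  have h2 := ((Real.GammaSeq_tendsto_Gamma (γ + 1 + D)).div
      (Real.GammaSeq_tendsto_Gamma γ) hγne).mul_const (Real.Gamma γ / Real.Gamma (γ + 1 + D))
  have hlim : Real.Gamma (γ + 1 + D) / Real.Gamma γ * (Real.Gamma γ / Real.Gamma (γ + 1 + D)) = 1 := by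
    field_simp
  rw [hlim] at h2
  have hg : Tendsto (fun n : ℕ => (n : ℝ) ^ ((1 : ℝ) + D) *
      (Real.Gamma ((n : ℝ) + 1 + γ) / Real.Gamma ((n : ℝ) + 2 + γ + D))) atTop (nhds 1) := by
    refine h2.congr' ?_
    filter_upwards [eventually_ge_atTop 1] with n hn
    have hn0 : (0 : ℝ) < (n : ℝ) := by exact_mod_cast hn
    have e1 : ∏ j ∈ Finset.range (n + 1), (γ + (j : ℝ)) =
        Real.Gamma (γ + (n + 1 : ℕ)) / Real.Gamma γ := by
      rw [gamma_prod_aux γ hγ (n + 1)]; field_simp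
    have e2 : ∏ j ∈ Finset.range (n + 1), (γ + 1 + D + (j : ℝ)) =
        Real.Gamma (γ + 1 + D + (n + 1 : ℕ)) / Real.Gamma (γ + 1 + D) := by
      rw [gamma_prod_aux (γ + 1 + D) (by linarith) (n + 1)]; field_simp
    have hG1 : (0 : ℝ) < Real.Gamma (γ + (n + 1 : ℕ)) := Real.Gamma_pos_of_pos (by positivity)
    have hG2 : (0 : ℝ) < Real.Gamma (γ + 1 + D + (n + 1 : ℕ)) := Real.Gamma_pos_of_pos (by positivity)
    have hfact : (0 : ℝ) < ((n.factorial : ℕ) : ℝ) := by exact_mod_cast n.factorial_pos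
    have hrpow : (n : ℝ) ^ (γ + 1 + D) = (n : ℝ) ^ γ * (n : ℝ) ^ ((1 : ℝ) + D) := by
      rw [← Real.rpow_add hn0]; ring_nf
    have harg1 : γ + ((n : ℕ) + 1 : ℕ) = (n : ℝ) + 1 + γ := by push_cast; ring
    have harg2 : γ + 1 + D + ((n : ℕ) + 1 : ℕ) = (n : ℝ) + 2 + γ + D := by push_cast; ring
    rw [harg1] at e1 hG1
    rw [harg2] at e2 hG2
    simp only [Pi.div_apply, Real.GammaSeq]
    rw [e1, e2, hrpow]
    have hnr : (0:ℝ) < (n:ℝ) ^ γ := Real.rpow_pos_of_pos hn0 γ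
    field_simp
  rw [← Filter.tendsto_add_atTop_iff_nat 1]
  have hq : Tendsto (fun n : ℕ => (((n : ℝ) + 1) / (n : ℝ)) ^ ((1 : ℝ) + D)) atTop (nhds 1) := by
    have h1 : Tendsto (fun n : ℕ => ((n : ℝ) + 1) / (n : ℝ)) atTop (nhds 1) := by
      have hb : Tendsto (fun n : ℕ => 1 + 1 / (n : ℝ)) atTop (nhds 1) := by
        simpa using (tendsto_const_nhds : Tendsto (fun _ : ℕ => (1:ℝ)) atTop (nhds 1)).add tendsto_one_div_atTop_nhds_zero_nat
      refine hb.congr' ?_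
      filter_upwards [eventually_ge_atTop 1] with n hn
      have hn0 : ((n:ℝ)) ≠ 0 := (Nat.cast_pos.mpr hn).ne'
      rw [add_div, div_self hn0]
    have hc : ContinuousAt (fun x : ℝ => x ^ ((1:ℝ) + D)) 1 :=
      Real.continuousAt_rpow_const 1 _ (Or.inl one_ne_zero)
    have := hc.tendsto.comp h1
    simpa [Function.comp_def] using this
  have := hq.mul hg
  rw [mul_one] at this
  refine this.congr' ?_
  filter_upwards [eventually_ge_atTop 1] with n hn
  have hn0 : (0 : ℝ) < (n : ℝ) := by exact_mod_cast hn
  have : (((n : ℝ) + 1) / (n : ℝ)) ^ ((1 : ℝ) + D) =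
      ((n : ℝ) + 1) ^ ((1:ℝ) + D) / (n : ℝ) ^ ((1:ℝ) + D) :=
    Real.div_rpow (by positivity) hn0.le _
  push_cast
  rw [this]
  have hnr : (0:ℝ) < (n:ℝ) ^ ((1:ℝ)+D) := Real.rpow_pos_of_pos hn0 _
  field_simp
  ring

open Filter Real in
private lemma Lk_closed_aux (D γ pv pve : ℝ) (hD : 0 < D) (hγ : 0 < γ)
    (m : ℕ) (hm : 1 ≤ m)
    (L : ℕ → ℝ) (hL0 : L 0 = pv * D / (γ + D))
    (hLk : ∀ k : ℕ, L (k + 1) =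
      (L k * ((k : ℝ) + γ) + (if k + 1 = m then (1 : ℝ) else 0) * pve * D)
        / (((k : ℝ) + 1) + γ + D)) :
    ∀ k : ℕ, L k = (pv * D * Real.Gamma (γ + D) / Real.Gamma γ
        + (if m ≤ k then pve * D * Real.Gamma ((m : ℝ) + γ + D) / Real.Gamma ((m : ℝ) + γ) else 0))
      * (Real.Gamma ((k : ℝ) + γ) / Real.Gamma ((k : ℝ) + 1 + γ + D)) := by
  have hγne : Real.Gamma γ ≠ 0 := (Real.Gamma_pos_of_pos hγ).ne'
  have hγDne : Real.Gamma (γ + D) ≠ 0 := (Real.Gamma_pos_of_pos (by linarith)).ne'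
  intro k
  induction k with
  | zero =>
    have hif : ¬ m ≤ 0 := by omega
    simp only [hif, if_false, add_zero, Nat.cast_zero, zero_add, hL0]
    have h1 : (1 : ℝ) + γ + D = (γ + D) + 1 := by ring
    rw [h1, Real.Gamma_add_one (by positivity)]
    field_simp
  | succ k ih =>
    have hGk : Real.Gamma ((k : ℝ) + γ) ≠ 0 := (Real.Gamma_pos_of_pos (by positivity)).ne'
    have hGk1 : Real.Gamma ((k : ℝ) + 1 + γ + D) ≠ 0 := (Real.Gamma_pos_of_pos (by positivity)).ne'
    have hGk1' : Real.Gamma ((k : ℝ) + 1 + γ) ≠ 0 := (Real.Gamma_pos_of_pos (by positivity)).ne'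
    have he1 : Real.Gamma ((k : ℝ) + 1 + γ) = ((k : ℝ) + γ) * Real.Gamma ((k : ℝ) + γ) := by
      have : (k : ℝ) + 1 + γ = ((k : ℝ) + γ) + 1 := by ring
      rw [this, Real.Gamma_add_one (by positivity)]
    have he2 : Real.Gamma ((k : ℝ) + 1 + 1 + γ + D)
        = ((k : ℝ) + 1 + γ + D) * Real.Gamma ((k : ℝ) + 1 + γ + D) := by
      have : (k : ℝ) + 1 + 1 + γ + D = ((k : ℝ) + 1 + γ + D) + 1 := by ring
      rw [this, Real.Gamma_add_one (by positivity)]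
    have hden : ((k : ℝ) + 1 + γ + D) ≠ 0 := by positivity
    rw [hLk k, ih]
    by_cases h : k + 1 = m
    · have hif1 : ¬ m ≤ k := by omega
      have hif2 : m ≤ k + 1 := by omega
      have hcast : (m : ℝ) = (k : ℝ) + 1 := by exact_mod_cast congrArg (Nat.cast (R := ℝ)) h.symm
      simp only [hif1, if_false, hif2, if_true, h, if_pos rfl, add_zero, hcast, le_refl]
      push_cast
      rw [he2, he1]
      field_simp [he1]
    · have hif : (if m ≤ k + 1 then pve * D * Real.Gamma ((m : ℝ) + γ + D) / Real.Gamma ((m : ℝ) + γ) else 0)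
          = (if m ≤ k then pve * D * Real.Gamma ((m : ℝ) + γ + D) / Real.Gamma ((m : ℝ) + γ) else 0) := by
        congr 1
        simp only [eq_iff_iff]
        omega
      simp only [h, if_false, Nat.cast_add, Nat.cast_one, hif]
      rw [he2, he1]
      field_simp [he1]
      ring

/-- For the sequence `L` defined by `L 0 = p_v·D/(γ+D)` and, for `k ≥ 1`,
`L k = (L (k−1)·(k−1+γ) + δ_{k,m}·p_ve·D)/(k+γ+D)` (with `D > 0`, `γ > 0`, `m ≥ 1`),
`L k · k^{1+D} → p_v·D·Γ(γ+D)/Γ(γ) + p_ve·D·Γ(m+γ+D)/Γ(m+γ)` as `k → ∞`;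
i.e. `L` decays like a power law with exponent `β = 1 + D`. -/
theorem Lk_power_law (D γ pv pve : ℝ) (hD : 0 < D) (hγ : 0 < γ)
    (hpv : 0 ≤ pv) (hpve : 0 ≤ pve) (m : ℕ) (hm : 1 ≤ m)
    (L : ℕ → ℝ) (hL0 : L 0 = pv * D / (γ + D))
    (hLk : ∀ k : ℕ, L (k + 1) =
      (L k * ((k : ℝ) + γ) + (if k + 1 = m then (1 : ℝ) else 0) * pve * D)
        / (((k : ℝ) + 1) + γ + D)) :
    Filter.Tendsto (fun k : ℕ => L k * (k : ℝ) ^ ((1 : ℝ) + D)) Filter.atTop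
      (nhds (pv * D * Real.Gamma (γ + D) / Real.Gamma γ
        + pve * D * Real.Gamma ((m : ℝ) + γ + D) / Real.Gamma ((m : ℝ) + γ))) := by
  have hclosed := Lk_closed_aux D γ pv pve hD hγ m hm L hL0 hLk
  set A : ℝ := pv * D * Real.Gamma (γ + D) / Real.Gamma γ
        + pve * D * Real.Gamma ((m : ℝ) + γ + D) / Real.Gamma ((m : ℝ) + γ) with hA
  have hkey := (key_asymp_aux γ D hγ hD).const_mul A
  rw [mul_one] at hkey
  refine hkey.congr' ?_
  filter_upwards [Filter.eventually_ge_atTop m] with k hk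
  rw [hclosed k, if_pos hk, ← hA]
  ring
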